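/- Let t > 0, 0 ≤ s ≤ t and R > 0. Then ∫_{ℝ²} φ_{t−s,R}(y)²·φ_{t−s,R}(y')²·1_{{|y−y'| ≤ 2s}} dy dy' ≤ 8·s·(t−s)⁴·(R+t−s). -/

import Mathlib

open MeasureTheory Real intervalIntegral

/-- `φ_{a,R}(y) = (1/2) ∫_{-R}^R 1_{|x-y|≤a} dx`. -/
noncomputable def phi (a R y : ℝ) : ℝ :=
  (1/2) * ∫ x in (-R)..R, if |x - y| ≤ a then (1:ℝ) else 0

lemma ind_eq (a y : ℝ) :
    (fun x => if |x - y| ≤ a then (1:ℝ) else 0)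
      = (Set.Icc (y - a) (y + a)).indicator (fun _ => (1:ℝ)) := by
  funext x
  have h : (|x - y| ≤ a) ↔ (x ∈ Set.Icc (y - a) (y + a)) := by
    rw [Set.mem_Icc, abs_le]
    constructor <;> (intro h; constructor <;> linarith [h.1, h.2])
  simp [Set.indicator_apply, h]

lemma phi_nonneg (a R y : ℝ) (hR : 0 ≤ R) : 0 ≤ phi a R y := by
  unfold phi
  have : (0:ℝ) ≤ ∫ x in (-R)..R, if |x - y| ≤ a then (1:ℝ) else 0 := by
    apply intervalIntegral.integral_nonneg (by linarith)
    intro x _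
    positivity
  linarith

lemma phi_le (a R y : ℝ) (ha : 0 ≤ a) (hR : 0 ≤ R) : phi a R y ≤ a := by
  unfold phi
  rw [intervalIntegral.integral_of_le (by linarith), ind_eq]
  have hint : Integrable ((Set.Icc (y - a) (y + a)).indicator (fun _ => (1:ℝ))) := by
    rw [integrable_indicator_iff measurableSet_Icc]
    exact integrableOn_const (by simp [Real.volume_Icc])
  have h1 : ∫ x in Set.Ioc (-R) R, (Set.Icc (y - a) (y + a)).indicator (fun _ => (1:ℝ)) x
      ≤ ∫ x, (Set.Icc (y - a) (y + a)).indicator (fun _ => (1:ℝ)) x := by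
    apply setIntegral_le_integral hint
    filter_upwards with x
    exact Set.indicator_nonneg (fun _ _ => zero_le_one) x
  have h2 : ∫ x, (Set.Icc (y - a) (y + a)).indicator (fun _ => (1:ℝ)) x = 2 * a := by
    rw [MeasureTheory.integral_indicator measurableSet_Icc, setIntegral_const, Real.volume_real_Icc_of_le (by linarith),
      smul_eq_mul]
    ring
  rw [h2] at h1
  linarith

lemma phi_zero (a R y : ℝ) (hR : 0 ≤ R) (hy : R + a < |y|) : phi a R y = 0 := by
  unfold phi
  have : ∫ x in (-R)..R, (if |x - y| ≤ a then (1:ℝ) else 0) = ∫ x in (-R)..R, (0:ℝ) := by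
    apply intervalIntegral.integral_congr
    intro x hx
    rw [Set.uIcc_of_le (by linarith)] at hx
    have hxR : |x| ≤ R := abs_le.mpr ⟨hx.1, hx.2⟩
    have : a < |x - y| := by
      have := abs_sub_abs_le_abs_sub y x
      rw [abs_sub_comm] at this
      linarith
    show (if |x - y| ≤ a then (1:ℝ) else 0) = 0
    rw [if_neg (not_le.mpr (by linarith))]
  rw [this]
  simp

/-- For `t > 0`, `0 ≤ s ≤ t` and `R > 0`:
`∬ φ_{t-s,R}(y)² φ_{t-s,R}(y')² 1_{|y-y'| ≤ 2s} dy dy' ≤ 8 s (t-s)⁴ (R+t-s)`. -/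
theorem stmt_14 (t s R : ℝ) (ht : 0 < t) (hs0 : 0 ≤ s) (hst : s ≤ t) (hR : 0 < R) :
    (∫ y : ℝ, ∫ y' : ℝ,
        (phi (t - s) R y) ^ 2 * (phi (t - s) R y') ^ 2 *
          (if |y - y'| ≤ 2 * s then (1:ℝ) else 0))
      ≤ 8 * s * (t - s) ^ 4 * (R + t - s) := by
  set a := t - s with ha_def
  have ha : 0 ≤ a := by linarith
  have hRa : 0 ≤ R + a := by linarith
  -- inner bound
  have Gnonneg : ∀ y : ℝ, 0 ≤ ∫ y' : ℝ, (phi a R y') ^ 2 * (if |y - y'| ≤ 2 * s then (1:ℝ) else 0) := by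
    intro y
    apply MeasureTheory.integral_nonneg
    intro y'
    positivity
  have Gle : ∀ y : ℝ, (∫ y' : ℝ, (phi a R y') ^ 2 * (if |y - y'| ≤ 2 * s then (1:ℝ) else 0))
      ≤ 4 * s * a ^ 2 := by
    intro y
    have hint : Integrable ((Set.Icc (y - 2*s) (y + 2*s)).indicator (fun _ => a ^ 2)) := by
      rw [integrable_indicator_iff measurableSet_Icc]
      exact integrableOn_const (by simp [Real.volume_Icc])
    have hmono : (∫ y' : ℝ, (phi a R y') ^ 2 * (if |y - y'| ≤ 2 * s then (1:ℝ) else 0))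
        ≤ ∫ y' : ℝ, (Set.Icc (y - 2*s) (y + 2*s)).indicator (fun _ => a ^ 2) y' := by
      apply integral_mono_of_nonneg
      · filter_upwards with y'; positivity
      · exact hint
      · filter_upwards with y'
        by_cases h : |y - y'| ≤ 2 * s
        · have hy' : y' ∈ Set.Icc (y - 2*s) (y + 2*s) := by
            rw [Set.mem_Icc]
            rw [abs_le] at h
            constructor <;> linarith [h.1, h.2]
          rw [if_pos h, Set.indicator_of_mem hy']
          have := phi_le a R y' ha hR.le
          have h0 := phi_nonneg a R y' hR.le
          nlinarith
        · rw [if_neg h]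
          have : (0:ℝ) ≤ (Set.Icc (y - 2*s) (y + 2*s)).indicator (fun _ => a ^ 2) y' :=
            Set.indicator_nonneg (fun _ _ => by positivity) y'
          linarith
    have hval : (∫ y' : ℝ, (Set.Icc (y - 2*s) (y + 2*s)).indicator (fun _ => a ^ 2) y')
        = 4 * s * a ^ 2 := by
      rw [MeasureTheory.integral_indicator measurableSet_Icc, setIntegral_const, Real.volume_real_Icc_of_le (by linarith),
        smul_eq_mul]
      ring
    linarith
  -- the outer integrand
  have Feq : ∀ y : ℝ, (∫ y' : ℝ,
      (phi a R y) ^ 2 * (phi a R y') ^ 2 * (if |y - y'| ≤ 2 * s then (1:ℝ) else 0))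
      = (phi a R y) ^ 2 * ∫ y' : ℝ, (phi a R y') ^ 2 * (if |y - y'| ≤ 2 * s then (1:ℝ) else 0) := by
    intro y
    rw [← MeasureTheory.integral_const_mul]
    congr 1
    funext y'
    ring
  have hintH : Integrable ((Set.Icc (-(R + a)) (R + a)).indicator
      (fun _ => 4 * s * a ^ 2 * a ^ 2)) := by
    rw [integrable_indicator_iff measurableSet_Icc]
    exact integrableOn_const (by simp [Real.volume_Icc])
  have houter : (∫ y : ℝ, ∫ y' : ℝ,
      (phi a R y) ^ 2 * (phi a R y') ^ 2 * (if |y - y'| ≤ 2 * s then (1:ℝ) else 0))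
      ≤ ∫ y : ℝ, (Set.Icc (-(R + a)) (R + a)).indicator (fun _ => 4 * s * a ^ 2 * a ^ 2) y := by
    apply integral_mono_of_nonneg
    · filter_upwards with y
      rw [Feq y]
      have := Gnonneg y
      have h0 := phi_nonneg a R y hR.le
      positivity
    · exact hintH
    · filter_upwards with y
      rw [Feq y]
      by_cases hy : |y| ≤ R + a
      · have hmem : y ∈ Set.Icc (-(R + a)) (R + a) := by
          rw [Set.mem_Icc]; rw [abs_le] at hy; exact hy
        rw [Set.indicator_of_mem hmem]
        have h1 := phi_le a R y ha hR.le
        have h0 := phi_nonneg a R y hR.le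
        have h2 := Gle y
        have h3 := Gnonneg y
        have hp2 : (phi a R y) ^ 2 ≤ a ^ 2 := by nlinarith
        calc (phi a R y) ^ 2 * ∫ y' : ℝ, (phi a R y') ^ 2 * (if |y - y'| ≤ 2 * s then (1:ℝ) else 0)
            ≤ a ^ 2 * ∫ y' : ℝ, (phi a R y') ^ 2 * (if |y - y'| ≤ 2 * s then (1:ℝ) else 0) :=
              mul_le_mul_of_nonneg_right hp2 h3
          _ ≤ a ^ 2 * (4 * s * a ^ 2) := mul_le_mul_of_nonneg_left h2 (by positivity)
          _ = 4 * s * a ^ 2 * a ^ 2 := by ring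
      · have : R + a < |y| := lt_of_not_ge hy
        rw [phi_zero a R y hR.le this]
        have : (0:ℝ) ≤ (Set.Icc (-(R + a)) (R + a)).indicator (fun _ => 4 * s * a ^ 2 * a ^ 2) y :=
          Set.indicator_nonneg (fun _ _ => by positivity) y
        simpa using this
  have hvalH : (∫ y : ℝ, (Set.Icc (-(R + a)) (R + a)).indicator
      (fun _ => 4 * s * a ^ 2 * a ^ 2) y) = 8 * s * a ^ 4 * (R + a) := by
    rw [MeasureTheory.integral_indicator measurableSet_Icc, setIntegral_const, Real.volume_real_Icc_of_le (by linarith),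
      smul_eq_mul]
    ring
  rw [hvalH] at houter
  have heq : 8 * s * a ^ 4 * (R + a) = 8 * s * a ^ 4 * (R + t - s) := by
    rw [ha_def]; ring
  linarith [houter, heq]
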